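/- Let G = (V,E) be a finite graph, p > 1 with dual exponent q (1/p + 1/q = 1), and A,B ⊆ V nonempty disjoint subsets such that Θ(A,B) ≠ ∅. Then Mod_p(Θ(A,B),G)^{1/p} · E_q(A,B,G)^{1/q} = 1, where E_q(A,B,G) is the minimal q-energy among unit flows from A to B. Moreover, if F is a unit flow from A to B and ρ is a Θ(A,B)-admissible density satisfying M_p(ρ)^{1/p} · E_q(F)^{1/q} = 1, then ρ is the optimal admissible density and F is the energy-minimizing unit flow. -/

import Mathlib

open Classical Real
set_option linter.unusedSectionVars false
set_option maxHeartbeats 1000000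

noncomputable section

namespace Paper

variable {V : Type*} [Fintype V] [DecidableEq V]

/-- A path in a graph `G`, packaged together with its endpoints. -/
def GPath (G : SimpleGraph V) : Type _ := Σ u v : V, G.Walk u v

/-- The `ρ`-length of a path: the sum of `ρ` over its edges. -/
def lenρ (G : SimpleGraph V) (ρ : Sym2 V → ℝ) (θ : GPath G) : ℝ :=
  (θ.2.2.edges.map ρ).sum

/-- A density on a graph: nonnegative and supported on the edge set. -/
def IsDensity (G : SimpleGraph V) (ρ : Sym2 V → ℝ) : Prop :=
  (∀ e, 0 ≤ ρ e) ∧ ∀ e, e ∉ G.edgeSet → ρ e = 0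

/-- `ρ` is admissible for the path family `Θ`. -/
def Admissible (G : SimpleGraph V) (Θ : Set (GPath G)) (ρ : Sym2 V → ℝ) : Prop :=
  (∀ e, 0 ≤ ρ e) ∧ ∀ θ ∈ Θ, 1 ≤ lenρ G ρ θ

/-- The `p`-mass of a density: `∑_{e ∈ E} ρ(e)^p`. -/
def massE (G : SimpleGraph V) (p : ℝ) (ρ : Sym2 V → ℝ) : ℝ :=
  ∑ e : Sym2 V, if e ∈ G.edgeSet then ρ e ^ p else 0

/-- The edge `p`-modulus of a family of paths. -/
def ModE (G : SimpleGraph V) (p : ℝ) (Θ : Set (GPath G)) : ℝ :=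
  sInf {m | ∃ ρ, Admissible G Θ ρ ∧ massE G p ρ = m}

/-- The optimal admissible density for a path family. -/
def IsOptDensityE (G : SimpleGraph V) (p : ℝ) (Θ : Set (GPath G)) (ρ : Sym2 V → ℝ) : Prop :=
  IsDensity G ρ ∧ Admissible G Θ ρ ∧
    ∀ σ, IsDensity G σ → Admissible G Θ σ → massE G p ρ ≤ massE G p σ

/-- The family `Θ(A,B)` of paths connecting `A` to `B`. -/
def pathsBetween (G : SimpleGraph V) (A B : Set V) : Set (GPath G) :=
  {θ | θ.1 ∈ A ∧ θ.2.1 ∈ B}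

/-- Vertex `p`-modulus of a family of vertex sets. -/
def ModV (p : ℝ) (Θh : Set (Finset V)) : ℝ :=
  sInf {m | ∃ ρ : V → ℝ, (∀ v, 0 ≤ ρ v) ∧ (∀ s ∈ Θh, 1 ≤ ∑ v ∈ s, ρ v) ∧
    (∑ v : V, ρ v ^ p) = m}

/-- Maximum degree of a graph. -/
def maxDeg (G : SimpleGraph V) : ℕ :=
  Finset.univ.sup fun v : V => Nat.card {u // G.Adj v u}

/-- `|U(x) − U(y)|` as a function on unordered pairs. -/
def ediff (U : V → ℝ) : Sym2 V → ℝ :=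
  Sym2.lift ⟨fun x y => |U x - U y|, fun x y => abs_sub_comm (U x) (U y)⟩

/-- The `p`-energy `∑_{{x,y}∈E} |U(x)−U(y)|^p` of a potential. -/
def capMass (G : SimpleGraph V) (p : ℝ) (U : V → ℝ) : ℝ :=
  ∑ e : Sym2 V, if e ∈ G.edgeSet then ediff U e ^ p else 0

/-- The `p`-capacity from `A` to `B`. -/
def CapE (G : SimpleGraph V) (p : ℝ) (A B : Finset V) : ℝ :=
  sInf {m | ∃ U : V → ℝ, (∀ a ∈ A, U a = 0) ∧ (∀ b ∈ B, U b = 1) ∧ capMass G p U = m}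

/-- `U` is `p`-harmonic in `A`. -/
def pHarmOn (G : SimpleGraph V) (p : ℝ) (U : V → ℝ) (A : Set V) : Prop :=
  ∀ x ∈ A, (∑ y : V,
    if G.Adj x y then Real.sign (U x - U y) * |U x - U y| ^ (p - 1) else 0) = 0

/-- The (outer) vertex boundary of `A`. -/
def vBoundary (G : SimpleGraph V) (A : Set V) : Set V :=
  {x | x ∉ A ∧ ∃ y ∈ A, G.Adj x y}

/-- A flow from `A` to `B`: antisymmetric, supported on edges, divergence free off `A ∪ B`. -/
def IsFlow (G : SimpleGraph V) (A B : Finset V) (F : V → V → ℝ) : Prop :=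
  (∀ x y, F x y = - F y x) ∧ (∀ x y, ¬ G.Adj x y → F x y = 0) ∧
  (∀ x, x ∉ A → x ∉ B → (∑ y : V, F x y) = 0)

/-- The total flow out of `A`. -/
def totalFlow (A : Finset V) (F : V → V → ℝ) : ℝ := ∑ x ∈ A, ∑ y : V, F x y

/-- `|F(e)|` as a function on unordered pairs. -/
def flowAbs (F : V → V → ℝ) : Sym2 V → ℝ :=
  Sym2.lift ⟨fun x y => |F x y| ⊔ |F y x|, fun x y => sup_comm _ _⟩

/-- The `q`-energy of a flow. -/
def energyQ (G : SimpleGraph V) (q : ℝ) (F : V → V → ℝ) : ℝ :=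
  ∑ e : Sym2 V, if e ∈ G.edgeSet then flowAbs F e ^ q else 0

/-- The minimal `q`-energy among unit flows from `A` to `B`. -/
def EminQ (G : SimpleGraph V) (q : ℝ) (A B : Finset V) : ℝ :=
  sInf {m | ∃ F, IsFlow G A B F ∧ totalFlow A F = 1 ∧ energyQ G q F = m}

theorem twice_sum (G : SimpleGraph V) (f : Sym2 V → ℝ) :
    ∑ x : V, ∑ y : V, (if G.Adj x y then f (s(x,y)) else 0)
      = 2 * ∑ e : Sym2 V, (if e ∈ G.edgeSet then f e else 0) := by
  have h : ∑ x : V, ∑ y : V, (if G.Adj x y then f (s(x,y)) else 0)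
      = ∑ p ∈ (Finset.univ : Finset (V × V)), (if G.Adj p.1 p.2 then f (s(p.1,p.2)) else 0) := by
    rw [← Finset.sum_product']
    rfl
  rw [h]
  rw [← Finset.sum_fiberwise (Finset.univ : Finset (V × V)) (fun p => s(p.1, p.2))
    (fun p => if G.Adj p.1 p.2 then f (s(p.1,p.2)) else 0)]
  rw [Finset.mul_sum]
  refine Finset.sum_congr rfl fun e _ => ?_
  induction e with
  | _ a b =>
    by_cases hab : G.Adj a b
    · have hne : a ≠ b := hab.ne
      have hfib : (Finset.univ : Finset (V × V)).filter (fun p => s(p.1, p.2) = s(a,b))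
          = {(a,b), (b,a)} := by
        ext p
        simp only [Finset.mem_filter, Finset.mem_univ, true_and, Finset.mem_insert,
          Finset.mem_singleton, Sym2.eq_iff, Prod.ext_iff]
      rw [hfib, Finset.sum_pair (by simp [hne, Ne])]
      have : s(b,a) = s(a,b) := Sym2.eq_swap
      simp [hab, hab.symm, this, G.mem_edgeSet.mpr hab]
      ring
    · have hnotin : s(a,b) ∉ G.edgeSet := fun hc => hab (G.mem_edgeSet.mp hc)
      rw [if_neg hnotin]
      rw [Finset.sum_eq_zero, mul_zero]
      intro p hp
      simp only [Finset.mem_filter] at hp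
      have : ¬ G.Adj p.1 p.2 := by
        intro hc
        rcases Sym2.eq_iff.mp hp.2 with ⟨h1,h2⟩|⟨h1,h2⟩ <;> subst h1 <;> subst h2
        · exact hab hc
        · exact hab hc.symm
      simp [this]


theorem telescope (G : SimpleGraph V) (U : V → ℝ) {u v : V} (w : G.Walk u v) :
    |U v - U u| ≤ (w.edges.map (ediff U)).sum := by
  induction w with
  | nil => simp
  | cons h w ih =>
    rename_i a b c
    simp only [SimpleGraph.Walk.edges_cons, List.map_cons, List.sum_cons]
    calc |U c - U a| ≤ |U b - U a| + |U c - U b| := by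
          have := abs_sub_le (U c) (U b) (U a); linarith [abs_sub_le (U c) (U b) (U a)]
      _ ≤ ediff U s(a,b) + (w.edges.map (ediff U)).sum := by
          have h1 : ediff U s(a,b) = |U a - U b| := rfl
          rw [h1, abs_sub_comm (U a) (U b)]
          exact add_le_add le_rfl ih


theorem myDeriv_abs_rpow {p : ℝ} (hp : 1 < p) (c : ℝ) :
    HasDerivAt (fun t => |c + t| ^ p) (p * Real.sign c * |c| ^ (p - 1)) 0 := by
  have hinner : HasDerivAt (fun t : ℝ => c + t) 1 0 := by
    simpa using (hasDerivAt_id (0:ℝ)).const_add c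
  have houter : HasDerivAt (fun x : ℝ => |x| ^ p) (p * |c| ^ (p - 2) * c) c :=
    hasDerivAt_abs_rpow c hp
  have hcomp : HasDerivAt (fun t : ℝ => |c + t| ^ p) (p * |c| ^ (p - 2) * c * 1) 0 := by
    have := HasDerivAt.comp (0:ℝ) (by simpa using houter) hinner
    simpa [Function.comp_def] using this
  convert hcomp using 1
  rcases eq_or_ne c 0 with rfl | hc
  · simp
  · have habs : (0:ℝ) < |c| := abs_pos.mpr hc
    have hre : Real.sign c * |c| = c := by
      rcases hc.lt_or_gt with h|h
      · rw [Real.sign_of_neg h, abs_of_neg h]; ring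
      · rw [Real.sign_of_pos h, abs_of_pos h]; ring
    have h2 : |c| ^ (p - 1) = |c| ^ (p - 2) * |c| := by
      rw [← Real.rpow_add_one habs.ne' (p-2)]; congr 1; ring
    rw [h2, mul_one]
    have hr : p * Real.sign c * (|c| ^ (p - 2) * |c|) = p * |c| ^ (p-2) * (Real.sign c * |c|) := by
      ring
    rw [hr, hre]


theorem capMass_continuous (G : SimpleGraph V) (p : ℝ) (hp : 0 < p) :
    Continuous (fun U : V → ℝ => capMass G p U) := by
  apply continuous_finset_sum
  intro e _
  by_cases he : e ∈ G.edgeSet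
  · simp only [if_pos he]
    induction e with
    | _ a b =>
      have : (fun U : V → ℝ => ediff U s(a,b) ^ p) = fun U : V → ℝ => |U a - U b| ^ p := rfl
      rw [this]
      exact (((continuous_apply a).sub (continuous_apply b)).abs).rpow_const
        (fun U => Or.inr hp.le)
  · simp only [if_neg he]; exact continuous_const


theorem exists_capMin (G : SimpleGraph V) (p : ℝ) (hp : 1 < p) (A B : Finset V)
    (hAB : Disjoint A B) :
    ∃ U : V → ℝ, (∀ a ∈ A, U a = 0) ∧ (∀ b ∈ B, U b = 1) ∧
      ∀ W : V → ℝ, (∀ a ∈ A, W a = 0) → (∀ b ∈ B, W b = 1) →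
        capMass G p U ≤ capMass G p W := by
  set K : Set (V → ℝ) := {U | (∀ v, U v ∈ Set.Icc (0:ℝ) 1) ∧ (∀ a ∈ A, U a = 0) ∧
    (∀ b ∈ B, U b = 1)} with hK
  have hKco : IsCompact K := by
    have h1 : IsCompact (Set.pi Set.univ fun _ : V => Set.Icc (0:ℝ) 1) :=
      isCompact_univ_pi fun _ => isCompact_Icc
    apply h1.of_isClosed_subset
    · have hKeq : K = (⋂ v, (fun U : V → ℝ => U v) ⁻¹' Set.Icc 0 1) ∩
          ((⋂ a ∈ A, (fun U : V → ℝ => U a) ⁻¹' {0}) ∩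
            (⋂ b ∈ B, (fun U : V → ℝ => U b) ⁻¹' {1})) := by
        ext U
        simp only [hK, Set.mem_setOf_eq, Set.mem_inter_iff, Set.mem_iInter, Set.mem_preimage,
          Set.mem_singleton_iff]
      rw [hKeq]
      exact ((isClosed_iInter fun v => isClosed_Icc.preimage (continuous_apply v)).inter
        ((isClosed_biInter fun a _ => isClosed_singleton.preimage (continuous_apply a)).inter
          (isClosed_biInter fun b _ => isClosed_singleton.preimage (continuous_apply b))))
    · intro U hU
      exact Set.mem_univ_pi.mpr fun v => hU.1 v
  have hKne : K.Nonempty := by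
    refine ⟨fun v => if v ∈ B then 1 else 0, fun v => ?_, fun a ha => ?_, fun b hb => ?_⟩
    · by_cases hv : v ∈ B <;> simp [hv]
    · have : a ∉ B := Finset.disjoint_left.mp hAB ha
      simp [this]
    · simp [hb]
  obtain ⟨U, hUK, hUmin⟩ := hKco.exists_isMinOn hKne
    ((capMass_continuous G p (by linarith)).continuousOn)
  refine ⟨U, hUK.2.1, hUK.2.2, ?_⟩
  intro W hWA hWB
  -- clamp W
  set cl : ℝ → ℝ := fun t => max (min t 1) 0 with hcl
  have hclK : (fun v => cl (W v)) ∈ K := by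
    refine ⟨fun v => ⟨le_max_right _ _, ?_⟩, fun a ha => ?_, fun b hb => ?_⟩
    · apply max_le (min_le_right _ _) zero_le_one
    · simp [cl, hWA a ha]
    · simp [cl, hWB b hb]
  have hlip : ∀ a b : ℝ, |cl a - cl b| ≤ |a - b| := by
    intro a b
    calc |max (min a 1) 0 - max (min b 1) 0| ≤ |min a 1 - min b 1| :=
          abs_max_sub_max_le_abs _ _ _
      _ ≤ max |a - b| |(1:ℝ) - 1| := abs_min_sub_min_le_max _ _ _ _
      _ = |a - b| := by simp
  have hclW : capMass G p (fun v => cl (W v)) ≤ capMass G p W := by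
    apply Finset.sum_le_sum
    intro e _
    by_cases he : e ∈ G.edgeSet
    · simp only [if_pos he]
      induction e with
      | _ a b =>
        have h1 : ediff (fun v => cl (W v)) s(a,b) = |cl (W a) - cl (W b)| := rfl
        have h2 : ediff W s(a,b) = |W a - W b| := rfl
        rw [h1, h2]
        exact Real.rpow_le_rpow (abs_nonneg _) (hlip _ _) (by linarith)
    · simp [if_neg he]
  exact le_trans (hUmin hclK) hclW


theorem min_pharm (G : SimpleGraph V) (p : ℝ) (hp : 1 < p) (A B : Finset V)
    (U : V → ℝ) (hUA : ∀ a ∈ A, U a = 0) (hUB : ∀ b ∈ B, U b = 1)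
    (hmin : ∀ W : V → ℝ, (∀ a ∈ A, W a = 0) → (∀ b ∈ B, W b = 1) →
      capMass G p U ≤ capMass G p W)
    (x0 : V) (hx0A : x0 ∉ A) (hx0B : x0 ∉ B) :
    (∑ y : V, if G.Adj x0 y then Real.sign (U x0 - U y) * |U x0 - U y| ^ (p - 1) else 0) = 0 := by
  set φ : ℝ → ℝ := fun t => ∑ y : V, if G.Adj x0 y then |U x0 + t - U y| ^ p else 0 with hφ
  set R : ℝ := ∑ x ∈ Finset.univ.erase x0, ∑ y ∈ Finset.univ.erase x0,
    (if G.Adj x y then |U x - U y| ^ p else 0) with hR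
  have hSord : ∀ W : V → ℝ, ∑ x : V, ∑ y : V, (if G.Adj x y then |W x - W y| ^ p else 0)
      = 2 * capMass G p W := by
    intro W
    have := twice_sum G (fun e => ediff W e ^ p)
    exact this
  have hdecomp : ∀ t : ℝ, capMass G p (Function.update U x0 (U x0 + t)) = R / 2 + φ t := by
    intro t
    set W : V → ℝ := Function.update U x0 (U x0 + t) with hWdef
    have hWx0 : W x0 = U x0 + t := Function.update_self x0 _ U
    have hWne : ∀ y, y ≠ x0 → W y = U y := fun y hy => Function.update_of_ne hy _ U
    have key : ∑ x : V, ∑ y : V, (if G.Adj x y then |W x - W y| ^ p else 0)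
        = R + (φ t + φ t) := by
      have inner_x0 : ∑ y : V, (if G.Adj x0 y then |W x0 - W y| ^ p else 0) = φ t := by
        apply Finset.sum_congr rfl
        intro y _
        by_cases hy : y = x0
        · subst hy; simp [G.irrefl]
        · by_cases ha : G.Adj x0 y
          · rw [if_pos ha, if_pos ha, hWx0, hWne y hy]
          · rw [if_neg ha, if_neg ha]
      have hsplitx : ∑ x : V, ∑ y : V, (if G.Adj x y then |W x - W y| ^ p else 0)
          = (∑ x ∈ Finset.univ.erase x0, ∑ y : V, (if G.Adj x y then |W x - W y| ^ p else 0))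
            + ∑ y : V, (if G.Adj x0 y then |W x0 - W y| ^ p else 0) := by
        rw [Finset.sum_erase_add Finset.univ _ (Finset.mem_univ x0)]
      have hx_erase : ∑ x ∈ Finset.univ.erase x0, ∑ y : V,
            (if G.Adj x y then |W x - W y| ^ p else 0) = R + φ t := by
        have hinner : ∀ x ∈ Finset.univ.erase x0,
            ∑ y : V, (if G.Adj x y then |W x - W y| ^ p else 0)
              = (∑ y ∈ Finset.univ.erase x0, (if G.Adj x y then |U x - U y| ^ p else 0))
                + (if G.Adj x x0 then |U x - (U x0 + t)| ^ p else 0) := by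
          intro x hx
          have hxne : x ≠ x0 := Finset.ne_of_mem_erase hx
          rw [← Finset.sum_erase_add Finset.univ _ (Finset.mem_univ x0)]
          congr 1
          · apply Finset.sum_congr rfl
            intro y hy
            have hyne : y ≠ x0 := Finset.ne_of_mem_erase hy
            rw [hWne x hxne, hWne y hyne]
          · rw [hWne x hxne, hWx0]
        rw [Finset.sum_congr rfl hinner, Finset.sum_add_distrib]
        congr 1
        have : ∑ x ∈ Finset.univ.erase x0, (if G.Adj x x0 then |U x - (U x0 + t)| ^ p else 0)
            = ∑ x ∈ Finset.univ.erase x0, (if G.Adj x0 x then |U x0 + t - U x| ^ p else 0) := by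
          apply Finset.sum_congr rfl
          intro x _
          by_cases ha : G.Adj x x0
          · rw [if_pos ha, if_pos ha.symm, abs_sub_comm]
          · rw [if_neg ha, if_neg (fun hc => ha hc.symm)]
        rw [this, hφ]
        apply Finset.sum_erase
        simp [G.irrefl]
      rw [hsplitx, hx_erase, inner_x0]
      ring
    have := hSord W
    rw [key] at this
    linarith
  have hlocmin : IsLocalMin φ 0 := by
    apply Filter.Eventually.of_forall
    intro t
    have hbc1 : ∀ a ∈ A, Function.update U x0 (U x0 + t) a = 0 := by
      intro a ha
      rw [Function.update_of_ne (by rintro rfl; exact hx0A ha) _ U]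
      exact hUA a ha
    have hbc2 : ∀ b ∈ B, Function.update U x0 (U x0 + t) b = 1 := by
      intro b hb
      rw [Function.update_of_ne (by rintro rfl; exact hx0B hb) _ U]
      exact hUB b hb
    have h1 := hmin _ hbc1 hbc2
    rw [hdecomp t] at h1
    have h0 : capMass G p U = R / 2 + φ 0 := by
      have := hdecomp 0
      rwa [add_zero, Function.update_eq_self] at this
    rw [h0] at h1
    simpa using h1
  have hderiv : HasDerivAt φ
      (∑ y : V, if G.Adj x0 y then p * Real.sign (U x0 - U y) * |U x0 - U y| ^ (p - 1) else 0)
      0 := by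
    apply HasDerivAt.fun_sum
    intro y _
    by_cases ha : G.Adj x0 y
    · simp only [if_pos ha]
      have base := myDeriv_abs_rpow hp (U x0 - U y)
      apply base.congr_of_eventuallyEq
      apply Filter.Eventually.of_forall
      intro t
      show |U x0 + t - U y| ^ p = |U x0 - U y + t| ^ p
      have e1 : U x0 + t - U y = U x0 - U y + t := by ring
      rw [e1]
    · simp only [if_neg ha]
      exact hasDerivAt_const 0 0
  have hD0 := hlocmin.hasDerivAt_eq_zero hderiv
  have hfac : ∑ y : V, (if G.Adj x0 y then p * Real.sign (U x0 - U y) * |U x0 - U y| ^ (p - 1) else 0)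
      = p * ∑ y : V, (if G.Adj x0 y then Real.sign (U x0 - U y) * |U x0 - U y| ^ (p - 1) else 0) := by
    rw [Finset.mul_sum]
    apply Finset.sum_congr rfl
    intro y _
    by_cases ha : G.Adj x0 y
    · rw [if_pos ha, if_pos ha]; ring
    · rw [if_neg ha, if_neg ha, mul_zero]
  rw [hfac] at hD0
  have hpne : p ≠ 0 := by linarith
  exact (mul_eq_zero.mp hD0).resolve_left hpne


theorem total_div_zero (F : V → V → ℝ) (hanti : ∀ x y, F x y = - F y x) :
    ∑ x : V, ∑ y : V, F x y = 0 := by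
  have : ∑ x : V, ∑ y : V, F x y = - ∑ x : V, ∑ y : V, F x y := by
    nth_rewrite 1 [Finset.sum_comm]
    rw [← Finset.sum_neg_distrib]
    refine Finset.sum_congr rfl fun b _ => ?_
    rw [← Finset.sum_neg_distrib]
    exact Finset.sum_congr rfl fun a _ => hanti a b
  linarith


theorem sum_by_parts (F : V → V → ℝ) (hanti : ∀ x y, F x y = - F y x) (d : V → ℝ) :
    ∑ x : V, ∑ y : V, F x y * (d y - d x) = -2 * ∑ x : V, d x * ∑ y : V, F x y := by
  have expand : ∑ x : V, ∑ y : V, F x y * (d y - d x)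
      = (∑ x : V, ∑ y : V, F x y * d y) - ∑ x : V, ∑ y : V, F x y * d x := by
    rw [← Finset.sum_sub_distrib]
    refine Finset.sum_congr rfl fun x _ => ?_
    rw [← Finset.sum_sub_distrib]
    refine Finset.sum_congr rfl fun y _ => ?_
    ring
  have h2 : ∑ x : V, ∑ y : V, F x y * d y = - ∑ x : V, d x * ∑ y : V, F x y := by
    rw [Finset.sum_comm, ← Finset.sum_neg_distrib]
    refine Finset.sum_congr rfl fun y _ => ?_
    rw [Finset.mul_sum, ← Finset.sum_neg_distrib]
    refine Finset.sum_congr rfl fun x _ => ?_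
    rw [hanti x y]; ring
  have h3 : ∑ x : V, ∑ y : V, F x y * d x = ∑ x : V, d x * ∑ y : V, F x y := by
    refine Finset.sum_congr rfl fun x _ => ?_
    rw [Finset.mul_sum]
    exact Finset.sum_congr rfl fun y _ => by ring
  rw [expand, h2, h3]
  ring


theorem divA_eq_neg_divB (G : SimpleGraph V) (A B : Finset V) (hAB : Disjoint A B)
    (F : V → V → ℝ) (hanti : ∀ x y, F x y = - F y x)
    (hdiv : ∀ x, x ∉ A → x ∉ B → (∑ y : V, F x y) = 0) :
    ∑ x ∈ A, ∑ y : V, F x y = - ∑ x ∈ B, ∑ y : V, F x y := by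
  have hsplit : ∑ x : V, ∑ y : V, F x y
      = ∑ x ∈ A, ∑ y : V, F x y + ∑ x ∈ Finset.univ \ A, ∑ y : V, F x y := by
    rw [← Finset.sum_sdiff (Finset.subset_univ A)]; ring
  have hsplit2 : ∑ x ∈ B, ∑ y : V, F x y = ∑ x ∈ Finset.univ \ A, ∑ y : V, F x y := by
    apply Finset.sum_subset
    · intro x hx
      simp only [Finset.mem_sdiff, Finset.mem_univ, true_and]
      exact fun hxA => (Finset.disjoint_right.mp hAB hx) hxA
    · intro x hx hxB
      simp only [Finset.mem_sdiff, Finset.mem_univ, true_and] at hx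
      exact hdiv x hx hxB
  rw [total_div_zero F hanti] at hsplit
  rw [← hsplit2] at hsplit
  linarith


theorem rsign_mul_self (r : ℝ) : Real.sign r * r = |r| := by
  rcases lt_trichotomy r 0 with h | rfl | h
  · rw [Real.sign_of_neg h, abs_of_neg h]; ring
  · simp
  · rw [Real.sign_of_pos h, abs_of_pos h]; ring


theorem lower_pairing (G : SimpleGraph V) (A B : Finset V) (hAB : Disjoint A B)
    (ρ : Sym2 V → ℝ) (hadm : Admissible G (pathsBetween G (↑A) (↑B)) ρ)
    (F : V → V → ℝ) (hF : IsFlow G A B F) (h1 : totalFlow A F = 1) :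
    1 ≤ ∑ e : Sym2 V, (if e ∈ G.edgeSet then ρ e * flowAbs F e else 0) := by
  obtain ⟨hρ0, hρ1⟩ := hadm
  obtain ⟨hanti, hsupp, hdiv⟩ := hF
  -- the distance function
  set W : V → Set ℝ := fun x => insert 1 {r : ℝ | ∃ a ∈ A, ∃ w : G.Walk a x, (w.edges.map ρ).sum = r} with hW
  have hWne : ∀ x, (W x).Nonempty := fun x => ⟨1, Set.mem_insert _ _⟩
  have hW0 : ∀ x, ∀ r ∈ W x, (0:ℝ) ≤ r := by
    intro x r hr
    rcases hr with rfl | ⟨a, ha, w, rfl⟩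
    · exact zero_le_one
    · apply List.sum_nonneg; intro t ht
      simp only [List.mem_map] at ht; obtain ⟨e, _, rfl⟩ := ht; exact hρ0 e
  have hWbdd : ∀ x, BddBelow (W x) := fun x => ⟨0, hW0 x⟩
  set d : V → ℝ := fun x => sInf (W x) with hd
  have hd1 : ∀ x, d x ≤ 1 := fun x => csInf_le (hWbdd x) (Set.mem_insert _ _)
  have hdA : ∀ a ∈ A, d a = 0 := by
    intro a ha
    apply le_antisymm
    · exact csInf_le (hWbdd a) (Or.inr ⟨a, ha, SimpleGraph.Walk.nil, by simp⟩)
    · exact le_csInf (hWne a) (hW0 a)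
  have hdB : ∀ b ∈ B, d b = 1 := by
    intro b hb
    refine le_antisymm (hd1 b) (le_csInf (hWne b) ?_)
    rintro r (rfl | ⟨a, ha, w, rfl⟩)
    · exact le_rfl
    · exact hρ1 ⟨a, b, w⟩ ⟨ha, hb⟩
  have hlip : ∀ x y, G.Adj x y → d y ≤ d x + ρ s(x,y) := by
    intro x y hxy
    have : d y - ρ s(x,y) ≤ d x := by
      apply le_csInf (hWne x)
      rintro r (rfl | ⟨a, ha, w, rfl⟩)
      · linarith [hd1 y, hρ0 s(x,y)]
      · have hmem : ((w.concat hxy).edges.map ρ).sum ∈ W y := by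
          exact Or.inr ⟨a, ha, w.concat hxy, rfl⟩
        have hlen : ((w.concat hxy).edges.map ρ).sum = (w.edges.map ρ).sum + ρ s(x,y) := by
          rw [SimpleGraph.Walk.edges_concat, List.concat_eq_append]
          simp
        have := csInf_le (hWbdd y) hmem
        rw [hlen] at this
        linarith
    linarith
  have hlip' : ∀ x y, G.Adj x y → |d y - d x| ≤ ρ s(x,y) := by
    intro x y hxy
    rw [abs_sub_le_iff]
    constructor
    · linarith [hlip x y hxy]
    · have := hlip y x hxy.symm
      rw [Sym2.eq_swap] at this
      linarith
  -- divergence facts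
  have hdivtot : ∑ x : V, ∑ y : V, F x y = 0 := by
    have : ∑ x : V, ∑ y : V, F x y = - ∑ x : V, ∑ y : V, F x y := by
      nth_rewrite 1 [Finset.sum_comm]
      rw [← Finset.sum_neg_distrib]
      refine Finset.sum_congr rfl fun b _ => ?_
      rw [← Finset.sum_neg_distrib]
      exact Finset.sum_congr rfl fun a _ => hanti a b
    linarith
  have hdivB : ∑ x ∈ B, ∑ y : V, F x y = -1 := by
    have hsplit : ∑ x : V, ∑ y : V, F x y
        = ∑ x ∈ A, ∑ y : V, F x y + ∑ x ∈ Finset.univ \ A, ∑ y : V, F x y := by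
      rw [← Finset.sum_sdiff (Finset.subset_univ A)]; ring
    have hsplit2 : ∑ x ∈ B, ∑ y : V, F x y = ∑ x ∈ Finset.univ \ A, ∑ y : V, F x y := by
      apply Finset.sum_subset
      · intro x hx
        simp only [Finset.mem_sdiff, Finset.mem_univ, true_and]
        exact fun hxA => (Finset.disjoint_right.mp hAB hx) hxA
      · intro x hx hxB
        simp only [Finset.mem_sdiff, Finset.mem_univ, true_and] at hx
        exact hdiv x hx hxB
    have h1' : ∑ x ∈ A, ∑ y : V, F x y = 1 := h1
    rw [hdivtot, h1'] at hsplit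
    rw [hsplit2]
    linarith
  -- summation by parts
  have hS : ∑ x : V, ∑ y : V, F x y * (d y - d x) = 2 := by
    have expand : ∑ x : V, ∑ y : V, F x y * (d y - d x)
        = (∑ x : V, ∑ y : V, F x y * d y) - ∑ x : V, ∑ y : V, F x y * d x := by
      rw [← Finset.sum_sub_distrib]
      congr 1; ext x
      rw [← Finset.sum_sub_distrib]
      congr 1; ext y
      ring
    have h2 : ∑ x : V, ∑ y : V, F x y * d y = - ∑ x : V, d x * ∑ y : V, F x y := by
      rw [Finset.sum_comm]
      rw [← Finset.sum_neg_distrib]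
      congr 1; ext y
      rw [Finset.mul_sum, ← Finset.sum_neg_distrib]
      congr 1; ext x
      rw [hanti x y]; ring
    have h3 : ∑ x : V, ∑ y : V, F x y * d x = ∑ x : V, d x * ∑ y : V, F x y := by
      congr 1; ext x
      rw [Finset.mul_sum]
      congr 1; ext y; ring
    have h4 : ∑ x : V, d x * ∑ y : V, F x y = -1 := by
      have hzero : ∀ x ∈ Finset.univ \ (A ∪ B), d x * ∑ y : V, F x y = 0 := by
        intro x hx
        simp only [Finset.mem_sdiff, Finset.mem_univ, true_and, Finset.mem_union, not_or] at hx
        rw [hdiv x hx.1 hx.2, mul_zero]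
      have : ∑ x : V, d x * ∑ y : V, F x y = ∑ x ∈ A ∪ B, d x * ∑ y : V, F x y := by
        symm
        apply Finset.sum_subset (Finset.subset_univ _)
        intro x _ hx
        simp only [Finset.mem_union, not_or] at hx
        rw [hdiv x hx.1 hx.2, mul_zero]
      rw [this, Finset.sum_union hAB]
      have hAzero : ∑ x ∈ A, d x * ∑ y : V, F x y = 0 :=
        Finset.sum_eq_zero fun x hx => by rw [hdA x hx, zero_mul]
      have hBone : ∑ x ∈ B, d x * ∑ y : V, F x y = ∑ x ∈ B, ∑ y : V, F x y := by
        apply Finset.sum_congr rfl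
        intro x hx
        rw [hdB x hx, one_mul]
      rw [hAzero, hBone, hdivB]
      ring
    rw [expand, h2, h3, h4]
    ring
  -- bound each term
  have hbound : ∑ x : V, ∑ y : V, F x y * (d y - d x)
      ≤ ∑ x : V, ∑ y : V, (if G.Adj x y then (fun e => ρ e * flowAbs F e) s(x,y) else 0) := by
    apply Finset.sum_le_sum
    intro x _
    apply Finset.sum_le_sum
    intro y _
    by_cases hxy : G.Adj x y
    · simp only [if_pos hxy]
      have hFle : |F x y| ≤ flowAbs F s(x,y) := le_sup_left
      calc F x y * (d y - d x) ≤ |F x y * (d y - d x)| := le_abs_self _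
        _ = |F x y| * |d y - d x| := abs_mul _ _
        _ ≤ flowAbs F s(x,y) * ρ s(x,y) := by
            apply mul_le_mul hFle (hlip' x y hxy) (abs_nonneg _)
            exact le_trans (abs_nonneg _) hFle
        _ = ρ s(x,y) * flowAbs F s(x,y) := mul_comm _ _
    · simp only [if_neg hxy, hsupp x y hxy, zero_mul, le_refl]
  rw [hS] at hbound
  rw [twice_sum G (fun e => ρ e * flowAbs F e)] at hbound
  linarith


theorem construct (G : SimpleGraph V) (p q : ℝ) (hp : 1 < p) (hpq : 1 / p + 1 / q = 1)
    (A B : Finset V) (hAB : Disjoint A B)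
    (hΘ : (pathsBetween G (↑A : Set V) (↑B : Set V)).Nonempty) :
    ∃ (κ : ℝ) (ρ0 : Sym2 V → ℝ) (F1 : V → V → ℝ), 0 < κ ∧
      Admissible G (pathsBetween G (↑A : Set V) (↑B : Set V)) ρ0 ∧ massE G p ρ0 = κ ∧
      IsFlow G A B F1 ∧ totalFlow A F1 = 1 ∧ energyQ G q F1 = κ ^ (1 - q) := by
  have hppos : (0:ℝ) < p := by linarith
  have hq : (p - 1) * q = p := by
    have h1 : 1 / q = 1 - 1 / p := by linarith
    have hpne : p ≠ 0 := by linarith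
    have h2 : 1 - 1/p > 0 := by
      have : 1/p < 1 := by
        rw [div_lt_one hppos]; exact hp
      linarith
    have hqpos : 0 < q := by
      by_contra hq
      push_neg at hq
      have : 1 / q ≤ 0 := by
        rcases hq.lt_or_eq with h | h
        · exact le_of_lt (div_neg_of_pos_of_neg one_pos h)
        · rw [h]; simp
      linarith
    have hqne : q ≠ 0 := ne_of_gt hqpos
    field_simp at h1
    -- h1 : p = (p - 1) * q or similar
    nlinarith [h1]
  have hqpos : 0 < q := by
    by_contra hqc
    push_neg at hqc
    have h2 : 1 - 1/p > 0 := by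
      have : 1/p < 1 := by rw [div_lt_one hppos]; exact hp
      linarith
    have : 1 / q ≤ 0 := by
      rcases hqc.lt_or_eq with h | h
      · exact le_of_lt (div_neg_of_pos_of_neg one_pos h)
      · rw [h]; simp
    linarith
  obtain ⟨U, hUA, hUB, hUmin⟩ := exists_capMin G p hp A B hAB
  set κ : ℝ := capMass G p U with hκdef
  set ρ0 : Sym2 V → ℝ := fun e => if e ∈ G.edgeSet then ediff U e else 0 with hρ0
  have hediff_nonneg : ∀ e, 0 ≤ ediff U e := by
    intro e
    induction e with
    | _ a b => exact abs_nonneg _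
  have hρ0nonneg : ∀ e, 0 ≤ ρ0 e := by
    intro e
    by_cases he : e ∈ G.edgeSet
    · simp only [hρ0, if_pos he]; exact hediff_nonneg e
    · simp [hρ0, if_neg he]
  -- admissibility
  have hadm : Admissible G (pathsBetween G (↑A : Set V) (↑B : Set V)) ρ0 := by
    refine ⟨hρ0nonneg, ?_⟩
    rintro ⟨a, b, w⟩ ⟨ha, hb⟩
    have hmap : w.edges.map ρ0 = w.edges.map (ediff U) := by
      apply List.map_congr_left
      intro e he
      have : e ∈ G.edgeSet := w.edges_subset_edgeSet he
      simp [hρ0, this]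
    have h1 : lenρ G ρ0 ⟨a, b, w⟩ = (w.edges.map (ediff U)).sum := by
      simp only [lenρ]; rw [hmap]
    rw [h1]
    have := telescope G U w
    have hba : |U b - U a| = 1 := by
      rw [hUB b hb, hUA a ha]; norm_num
    linarith
  -- massE = κ
  have hmass : massE G p ρ0 = κ := by
    apply Finset.sum_congr rfl
    intro e _
    by_cases he : e ∈ G.edgeSet
    · simp [hρ0, he]
    · simp [he]
  -- κ > 0
  have hκnonneg : 0 ≤ κ := by
    apply Finset.sum_nonneg
    intro e _
    by_cases he : e ∈ G.edgeSet
    · simp only [if_pos he]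
      exact Real.rpow_nonneg (hediff_nonneg e) p
    · simp [he]
  have hκpos : 0 < κ := by
    rcases hκnonneg.lt_or_eq with h | h
    · exact h
    exfalso
    have hzero : κ = 0 := h.symm
    have hterm : ∀ e ∈ (Finset.univ : Finset (Sym2 V)),
        (if e ∈ G.edgeSet then ediff U e ^ p else 0) = 0 := by
      rw [← Finset.sum_eq_zero_iff_of_nonneg]
      · exact hzero
      · intro e _
        by_cases he : e ∈ G.edgeSet
        · simp only [if_pos he]; exact Real.rpow_nonneg (hediff_nonneg e) p
        · simp [he]
    have hρ0zero : ∀ e, ρ0 e = 0 := by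
      intro e
      by_cases he : e ∈ G.edgeSet
      · have h1 := hterm e (Finset.mem_univ e)
        rw [if_pos he] at h1
        have h2 : ediff U e = 0 := by
          by_contra hne
          have hpos : 0 < ediff U e := (hediff_nonneg e).lt_of_ne (Ne.symm hne)
          have := Real.rpow_pos_of_pos hpos p
          linarith
        simp [hρ0, he, h2]
      · simp [hρ0, he]
    obtain ⟨θ0, hθ0⟩ := hΘ
    have hge := hadm.2 θ0 hθ0
    have hlen : lenρ G ρ0 θ0 = 0 := by
      simp only [lenρ]
      apply List.sum_eq_zero
      intro x hx
      simp only [List.mem_map] at hx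
      obtain ⟨e, _, rfl⟩ := hx
      exact hρ0zero e
    rw [hlen] at hge
    linarith
  -- the p-harmonic flow
  set F0 : V → V → ℝ :=
    fun x y => if G.Adj x y then Real.sign (U y - U x) * |U x - U y| ^ (p-1) else 0 with hF0
  have hsign : ∀ x y : V, Real.sign (U x - U y) = - Real.sign (U y - U x) := by
    intro x y
    rw [show U x - U y = -(U y - U x) by ring, Real.sign_neg]
  have hanti0 : ∀ x y, F0 x y = - F0 y x := by
    intro x y
    by_cases ha : G.Adj x y
    · simp only [hF0, if_pos ha, if_pos ha.symm]
      rw [hsign y x, abs_sub_comm (U y) (U x)]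
      ring
    · have hyx : ¬ G.Adj y x := fun h => ha (G.adj_symm h)
      simp only [hF0, if_neg ha, if_neg hyx, neg_zero]
  have hsupp0 : ∀ x y, ¬ G.Adj x y → F0 x y = 0 := by
    intro x y h; simp [hF0, h]
  have hdiv0 : ∀ x, x ∉ A → x ∉ B → (∑ y : V, F0 x y) = 0 := by
    intro x hxA hxB
    have hph := min_pharm G p hp A B U hUA hUB hUmin x hxA hxB
    have heq : ∑ y : V, F0 x y
        = - ∑ y : V, (if G.Adj x y then Real.sign (U x - U y) * |U x - U y| ^ (p-1) else 0) := by
      rw [← Finset.sum_neg_distrib]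
      refine Finset.sum_congr rfl fun y _ => ?_
      by_cases ha : G.Adj x y
      · simp only [hF0, if_pos ha]
        rw [hsign x y]
        ring
      · simp [hF0, ha]
    rw [heq, hph, neg_zero]
  -- energy identity
  have hkey : ∑ x : V, ∑ y : V, F0 x y * (U y - U x) = 2 * κ := by
    have hterm : ∀ x y : V, F0 x y * (U y - U x)
        = (if G.Adj x y then (fun e => ediff U e ^ p) s(x,y) else 0) := by
      intro x y
      by_cases ha : G.Adj x y
      · simp only [hF0, if_pos ha]
        have hed : ediff U s(x,y) = |U x - U y| := rfl
        rw [hed]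
        have habs : |U x - U y| = |U y - U x| := abs_sub_comm _ _
        rw [habs]
        have hre : Real.sign (U y - U x) * |U y - U x| ^ (p-1) * (U y - U x)
            = (Real.sign (U y - U x) * (U y - U x)) * |U y - U x| ^ (p-1) := by ring
        rw [hre, rsign_mul_self]
        rcases eq_or_ne (U y - U x) 0 with h0 | h0
        · rw [h0, abs_zero, Real.zero_rpow (ne_of_gt hppos), zero_mul]
        · have hap : 0 < |U y - U x| := abs_pos.mpr h0
          have : |U y - U x| ^ p = |U y - U x| ^ (1 + (p-1)) := by norm_num
          rw [this, Real.rpow_add hap, Real.rpow_one]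
      · simp [hF0, ha]
    have h1 : ∑ x : V, ∑ y : V, F0 x y * (U y - U x)
        = ∑ x : V, ∑ y : V, (if G.Adj x y then (fun e => ediff U e ^ p) s(x,y) else 0) := by
      exact Finset.sum_congr rfl fun x _ => Finset.sum_congr rfl fun y _ => hterm x y
    rw [h1, twice_sum G (fun e => ediff U e ^ p)]
    rfl
  have hdivsum : ∑ x : V, U x * ∑ y : V, F0 x y = - κ := by
    have h1 := sum_by_parts F0 hanti0 U
    rw [hkey] at h1
    linarith
  have hBdiv : ∑ x ∈ B, ∑ y : V, F0 x y = - κ := by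
    have h2 : ∑ x : V, U x * ∑ y : V, F0 x y = ∑ x ∈ A ∪ B, U x * ∑ y : V, F0 x y := by
      symm
      apply Finset.sum_subset (Finset.subset_univ _)
      intro x _ hx
      simp only [Finset.mem_union, not_or] at hx
      rw [hdiv0 x hx.1 hx.2, mul_zero]
    rw [h2, Finset.sum_union hAB] at hdivsum
    have hA0 : ∑ x ∈ A, U x * ∑ y : V, F0 x y = 0 :=
      Finset.sum_eq_zero fun x hx => by rw [hUA x hx, zero_mul]
    have hB1 : ∑ x ∈ B, U x * ∑ y : V, F0 x y = ∑ x ∈ B, ∑ y : V, F0 x y :=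
      Finset.sum_congr rfl fun x hx => by rw [hUB x hx, one_mul]
    rw [hA0, hB1, zero_add] at hdivsum
    exact hdivsum
  have htot0 : totalFlow A F0 = κ := by
    have := divA_eq_neg_divB G A B hAB F0 hanti0 hdiv0
    rw [hBdiv] at this
    simpa [totalFlow] using this
  -- the unit flow
  set F1 : V → V → ℝ := fun x y => κ⁻¹ * F0 x y with hF1
  have hIsFlow : IsFlow G A B F1 := by
    refine ⟨fun x y => ?_, fun x y h => ?_, fun x hxA hxB => ?_⟩
    · simp only [hF1]; rw [hanti0 x y]; ring
    · simp [hF1, hsupp0 x y h]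
    · simp only [hF1, ← Finset.mul_sum, hdiv0 x hxA hxB, mul_zero]
  have htot1 : totalFlow A F1 = 1 := by
    have heq : totalFlow A F1 = κ⁻¹ * totalFlow A F0 := by
      simp only [totalFlow, hF1, Finset.mul_sum]
    rw [heq, htot0, inv_mul_cancel₀ (ne_of_gt hκpos)]
  -- energy of F1
  have habsF0 : ∀ x y : V, G.Adj x y → |F0 x y| = ediff U s(x,y) ^ (p-1) := by
    intro x y ha
    simp only [hF0, if_pos ha]
    have hed : ediff U s(x,y) = |U x - U y| := rfl
    rw [hed]
    rcases eq_or_ne (U y - U x) 0 with h0 | h0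
    · have h1 : U x - U y = 0 := by linarith [h0]
      rw [h0, h1, Real.sign_zero, zero_mul, abs_zero]
      rw [Real.zero_rpow (ne_of_gt (show (0:ℝ) < p - 1 by linarith))]
    · have hsne : |Real.sign (U y - U x)| = 1 := by
        rcases Real.sign_apply_eq_of_ne_zero _ h0 with h | h <;> rw [h] <;> norm_num
      rw [abs_mul, hsne, one_mul, abs_of_nonneg (Real.rpow_nonneg (abs_nonneg _) _)]
  have hflowAbs : ∀ x y : V, G.Adj x y →
      flowAbs F1 s(x,y) = κ⁻¹ * ediff U s(x,y) ^ (p-1) := by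
    intro x y ha
    have h1 : flowAbs F1 s(x,y) = |F1 x y| ⊔ |F1 y x| := rfl
    have h2 : |F1 y x| = |F1 x y| := by
      simp only [hF1]
      rw [hanti0 x y]
      rw [abs_mul, abs_mul, abs_neg]
    rw [h1, h2, sup_idem]
    simp only [hF1]
    rw [abs_mul, abs_of_nonneg (inv_nonneg.mpr hκnonneg), habsF0 x y ha]
  have henergy : energyQ G q F1 = κ ^ (1 - q) := by
    have hterm : ∀ e : Sym2 V, e ∈ G.edgeSet →
        flowAbs F1 e ^ q = κ ^ (-q) * ediff U e ^ p := by
      intro e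
      induction e with
      | _ x y =>
        intro he
        have ha : G.Adj x y := G.mem_edgeSet.mp he
        rw [hflowAbs x y ha]
        rw [Real.mul_rpow (inv_nonneg.mpr hκnonneg)
          (Real.rpow_nonneg (hediff_nonneg _) _)]
        congr 1
        · rw [Real.inv_rpow hκnonneg, ← Real.rpow_neg hκnonneg]
        · rw [← Real.rpow_mul (hediff_nonneg _), hq]
    have h1 : energyQ G q F1 = ∑ e : Sym2 V,
        (if e ∈ G.edgeSet then κ ^ (-q) * ediff U e ^ p else 0) := by
      apply Finset.sum_congr rfl
      intro e _
      by_cases he : e ∈ G.edgeSet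
      · rw [if_pos he, if_pos he, hterm e he]
      · rw [if_neg he, if_neg he]
    rw [h1]
    have h2 : ∑ e : Sym2 V, (if e ∈ G.edgeSet then κ ^ (-q) * ediff U e ^ p else 0)
        = κ ^ (-q) * ∑ e : Sym2 V, (if e ∈ G.edgeSet then ediff U e ^ p else 0) := by
      rw [Finset.mul_sum]
      apply Finset.sum_congr rfl
      intro e _
      by_cases he : e ∈ G.edgeSet
      · rw [if_pos he, if_pos he]
      · rw [if_neg he, if_neg he, mul_zero]
    rw [h2]
    have h3 : κ ^ (-q) * κ = κ ^ (1 - q) := by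
      nth_rewrite 2 [← Real.rpow_one κ]
      rw [← Real.rpow_add hκpos]
      congr 1
      ring
    have h4 : ∑ e : Sym2 V, (if e ∈ G.edgeSet then ediff U e ^ p else 0) = κ := rfl
    rw [h4, h3]
  exact ⟨κ, ρ0, F1, hκpos, hadm, hmass, hIsFlow, htot1, henergy⟩


end Paper

open Paper in
/-- Duality of modulus and flows:
`Mod_p(Θ(A,B),G)^{1/p} · E_q(A,B,G)^{1/q} = 1`; moreover any admissible density and
unit flow satisfying the equality case are optimal. -/
theorem statement4 {V : Type*} [Fintype V] [DecidableEq V] (G : SimpleGraph V)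
    (p q : ℝ) (hp : 1 < p) (hpq : 1 / p + 1 / q = 1) (A B : Finset V)
    (hA : A.Nonempty) (hB : B.Nonempty) (hAB : Disjoint A B)
    (hΘ : (pathsBetween G (↑A : Set V) (↑B : Set V)).Nonempty) :
    ModE G p (pathsBetween G (↑A : Set V) (↑B : Set V)) ^ (1 / p) *
        EminQ G q A B ^ (1 / q) = 1 ∧
      ∀ (F : V → V → ℝ) (ρ : Sym2 V → ℝ),
        IsFlow G A B F → totalFlow A F = 1 →
        Admissible G (pathsBetween G (↑A : Set V) (↑B : Set V)) ρ →
        massE G p ρ ^ (1 / p) * energyQ G q F ^ (1 / q) = 1 →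
        ModE G p (pathsBetween G (↑A : Set V) (↑B : Set V)) = massE G p ρ ∧
          EminQ G q A B = energyQ G q F := by
  classical
  have hppos : (0:ℝ) < p := lt_trans one_pos hp
  have hqpos : 0 < q := by
    by_contra hqc
    push_neg at hqc
    have h2 : 1 - 1/p > 0 := by
      have : 1/p < 1 := by rw [div_lt_one hppos]; exact hp
      linarith
    have : 1 / q ≤ 0 := by
      rcases hqc.lt_or_eq with h | h
      · exact le_of_lt (div_neg_of_pos_of_neg one_pos h)
      · rw [h]; simp
    linarith
  have hqne : q ≠ 0 := ne_of_gt hqpos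
  have hexp : (1 - q) * (1/q) = -(1/p) := by
    have h1 : (1 - q) * (1/q) = 1/q - 1 := by
      rw [sub_mul, one_mul, mul_one_div, div_self hqne]
    linarith
  obtain ⟨κ, ρ0, F1, hκpos, hadm0, hmass0, hflow1, htot1, hen1⟩ :=
    construct G p q hp hpq A B hAB hΘ
  have hκnonneg : (0:ℝ) ≤ κ := hκpos.le
  have hflowAbs_nonneg : ∀ (F : V → V → ℝ) (e : Sym2 V), 0 ≤ flowAbs F e := by
    intro F e
    induction e with
    | _ x y => exact le_trans (abs_nonneg _) le_sup_left
  have hmass_nonneg : ∀ ρ : Sym2 V → ℝ, (∀ e, 0 ≤ ρ e) → 0 ≤ massE G p ρ := by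
    intro ρ hρ
    apply Finset.sum_nonneg
    intro e _
    by_cases he : e ∈ G.edgeSet
    · simp only [if_pos he]; exact Real.rpow_nonneg (hρ e) p
    · simp [he]
  have hen_nonneg : ∀ F : V → V → ℝ, 0 ≤ energyQ G q F := by
    intro F
    apply Finset.sum_nonneg
    intro e _
    by_cases he : e ∈ G.edgeSet
    · simp only [if_pos he]; exact Real.rpow_nonneg (hflowAbs_nonneg F e) q
    · simp [he]
  have sum_ite_edge : ∀ f : Sym2 V → ℝ, (∑ e : Sym2 V, if e ∈ G.edgeSet then f e else 0)
      = ∑ e ∈ G.edgeFinset, f e := by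
    intro f
    have hef : G.edgeFinset = Finset.univ.filter (fun e => e ∈ G.edgeSet) := by
      ext e; simp [SimpleGraph.mem_edgeFinset]
    rw [hef, Finset.sum_filter]
  have hpair : ∀ (ρ : Sym2 V → ℝ) (F : V → V → ℝ),
      Admissible G (pathsBetween G (↑A : Set V) (↑B : Set V)) ρ → IsFlow G A B F →
      totalFlow A F = 1 → 1 ≤ massE G p ρ ^ (1/p) * energyQ G q F ^ (1/q) := by
    intro ρ F hadm hflow htot
    have h1 := lower_pairing G A B hAB ρ hadm F hflow htot
    have hconj : Real.HolderConjugate p q := Real.holderConjugate_iff.mpr ⟨hp, by rw [← one_div, ← one_div]; exact hpq⟩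
    have h3 := Real.inner_le_Lp_mul_Lq_of_nonneg (s := G.edgeFinset) (f := fun e => ρ e)
      (g := fun e => flowAbs F e) hconj (fun e _ => hadm.1 e) (fun e _ => hflowAbs_nonneg F e)
    have hm : massE G p ρ = ∑ e ∈ G.edgeFinset, ρ e ^ p := sum_ite_edge (fun e => ρ e ^ p)
    have hE : energyQ G q F = ∑ e ∈ G.edgeFinset, flowAbs F e ^ q :=
      sum_ite_edge (fun e => flowAbs F e ^ q)
    rw [sum_ite_edge (fun e => ρ e * flowAbs F e)] at h1
    rw [hm, hE]
    exact le_trans h1 h3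
  have hModset : κ ∈ {m | ∃ ρ, Admissible G (pathsBetween G (↑A : Set V) (↑B : Set V)) ρ ∧
      massE G p ρ = m} := ⟨ρ0, hadm0, hmass0⟩
  have hEset : κ ^ (1 - q) ∈ {m | ∃ F, IsFlow G A B F ∧ totalFlow A F = 1 ∧
      energyQ G q F = m} := ⟨F1, hflow1, htot1, hen1⟩
  have hbddM : BddBelow {m | ∃ ρ, Admissible G (pathsBetween G (↑A : Set V) (↑B : Set V)) ρ ∧
      massE G p ρ = m} := by
    refine ⟨0, ?_⟩
    rintro m ⟨ρ, hadm, rfl⟩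
    exact hmass_nonneg ρ hadm.1
  have hbddE : BddBelow {m | ∃ F, IsFlow G A B F ∧ totalFlow A F = 1 ∧ energyQ G q F = m} := by
    refine ⟨0, ?_⟩
    rintro m ⟨F, _, _, rfl⟩
    exact hen_nonneg F
  have hpow1 : (κ ^ (1 - q)) ^ (1/q) = κ ^ (-(1/p)) := by
    rw [← Real.rpow_mul hκnonneg, hexp]
  have hmul1 : κ ^ (1/p) * κ ^ (-(1/p)) = 1 := by
    rw [← Real.rpow_add hκpos]
    norm_num
  have hppow : (0:ℝ) < κ ^ (1/p) := Real.rpow_pos_of_pos hκpos _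
  have hnpow : (0:ℝ) < κ ^ (-(1/p)) := Real.rpow_pos_of_pos hκpos _
  have hge_mass : ∀ m ∈ {m | ∃ ρ, Admissible G (pathsBetween G (↑A : Set V) (↑B : Set V)) ρ ∧
      massE G p ρ = m}, κ ≤ m := by
    rintro m ⟨ρ, hadm, rfl⟩
    have h1 := hpair ρ F1 hadm hflow1 htot1
    rw [hen1, hpow1] at h1
    by_contra hlt
    push_neg at hlt
    have h2 : massE G p ρ ^ (1/p) < κ ^ (1/p) :=
      Real.rpow_lt_rpow (hmass_nonneg ρ hadm.1) hlt (one_div_pos.mpr hppos)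
    nlinarith
  have hge_en : ∀ n ∈ {m | ∃ F, IsFlow G A B F ∧ totalFlow A F = 1 ∧ energyQ G q F = m},
      κ ^ (1 - q) ≤ n := by
    rintro n ⟨F, hfl, htot, rfl⟩
    have h1 := hpair ρ0 F hadm0 hfl htot
    rw [hmass0] at h1
    by_contra hlt
    push_neg at hlt
    have h2 : energyQ G q F ^ (1/q) < (κ ^ (1 - q)) ^ (1/q) :=
      Real.rpow_lt_rpow (hen_nonneg F) hlt (one_div_pos.mpr hqpos)
    rw [hpow1] at h2
    nlinarith
  have hMod : ModE G p (pathsBetween G (↑A : Set V) (↑B : Set V)) = κ :=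
    le_antisymm (csInf_le hbddM hModset) (le_csInf ⟨κ, hModset⟩ hge_mass)
  have hEmin : EminQ G q A B = κ ^ (1 - q) :=
    le_antisymm (csInf_le hbddE hEset) (le_csInf ⟨_, hEset⟩ hge_en)
  constructor
  · rw [hMod, hEmin, hpow1, hmul1]
  · intro F ρ hflowF htotF hadmρ hprod
    have hκle : κ ≤ massE G p ρ := hge_mass _ ⟨ρ, hadmρ, rfl⟩
    have hκen : κ ^ (1 - q) ≤ energyQ G q F := hge_en _ ⟨F, hflowF, htotF, rfl⟩
    have h2 : (κ ^ (1 - q)) ^ (1/q) ≤ energyQ G q F ^ (1/q) :=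
      Real.rpow_le_rpow (Real.rpow_nonneg hκnonneg _) hκen (le_of_lt (one_div_pos.mpr hqpos))
    rw [hpow1] at h2
    have hmle : massE G p ρ ≤ κ := by
      by_contra hlt
      push_neg at hlt
      have h3 : κ ^ (1/p) < massE G p ρ ^ (1/p) :=
        Real.rpow_lt_rpow hκnonneg hlt (one_div_pos.mpr hppos)
      have h5 : 0 < massE G p ρ ^ (1/p) := lt_trans hppow h3
      nlinarith
    have hmeq : massE G p ρ = κ := le_antisymm hmle hκle
    have heneq : energyQ G q F = κ ^ (1 - q) := by
      refine le_antisymm ?_ hκen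
      by_contra hlt
      push_neg at hlt
      have h3 : (κ ^ (1 - q)) ^ (1/q) < energyQ G q F ^ (1/q) :=
        Real.rpow_lt_rpow (Real.rpow_nonneg hκnonneg _) hlt (one_div_pos.mpr hqpos)
      rw [hpow1] at h3
      have h4 : κ ^ (1/p) ≤ massE G p ρ ^ (1/p) :=
        Real.rpow_le_rpow hκnonneg hκle (le_of_lt (one_div_pos.mpr hppos))
      have h6 : 0 ≤ energyQ G q F ^ (1/q) := Real.rpow_nonneg (hen_nonneg F) _
      nlinarith
    exact ⟨by rw [hMod, hmeq], by rw [hEmin, heneq]⟩
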